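/- arXiv:1006.2062 — 3 statements merged into one kernel-verified Lean document; each statement's English description precedes it below -/
import Mathlib

section
/- Let 𝔫 be a finite-dimensional complex nilpotent Lie algebra and ρ: 𝔫 → gl(V) a finite-dimensional representation. Then there exist representations δ and ν of 𝔫 on V such that ρ = δ + ν (as linear maps), δ(x) is diagonalizable for every x, ν(x) is nilpotent for every x, δ([𝔫,𝔫]) = 0, and δ(x) commutes with ν(y) for all x, y ∈ 𝔫. -/
attribute [local instance 100] LieRing.ofAssociativeRing

open DirectSum LieModule Polynomial in

theorem rep_decomposition_diagonal_nilpotent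
    (n V : Type*) [LieRing n] [LieAlgebra ℂ n] [FiniteDimensional ℂ n]
    [LieRing.IsNilpotent n]
    [AddCommGroup V] [Module ℂ V] [FiniteDimensional ℂ V]
    (ρ : n →ₗ⁅ℂ⁆ Module.End ℂ V) :
    ∃ δ ν : n →ₗ⁅ℂ⁆ Module.End ℂ V,
      (∀ x, ρ x = δ x + ν x) ∧
      (∀ x : n, (δ x).IsSemisimple) ∧
      (∀ x : n, IsNilpotent (ν x)) ∧
      (∀ x y : n, δ ⁅x, y⁆ = 0) ∧
      (∀ x y : n, Commute (δ x) (ν y)) := by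
  classical
  letI : LieRingModule n V := LieRingModule.compLieHom V ρ
  haveI : LieModule ℂ n V := LieModule.compLieHom V ρ
  haveI := Fintype.ofFinite (LieModule.Weight ℂ n V)
  set S : Weight ℂ n V → Submodule ℂ V :=
    fun χ ↦ (genWeightSpace V (χ : n → ℂ) : Submodule ℂ V) with hSdef
  have hds : DirectSum.IsInternal S :=
    DirectSum.isInternal_submodule_of_iSupIndep_of_iSup_eq_top
      (LieSubmodule.iSupIndep_toSubmodule.mpr <|
        LieModule.iSupIndep_genWeightSpace' ℂ n V)
      (LieSubmodule.iSup_toSubmodule_eq_top.mpr <|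
        LieModule.iSup_genWeightSpace_eq_top' ℂ n V)
  set e : (⨁ χ, S χ) ≃ₗ[ℂ] V :=
    LinearEquiv.ofBijective (DirectSum.coeLinearMap S) hds with hedef
  -- invariance of weight spaces under ρ
  have hinv : ∀ (x : n) (χ : LieModule.Weight ℂ n V) (v : V), v ∈ S χ → ρ x v ∈ S χ := by
    intro x χ v hv
    exact (LieModule.genWeightSpace V (χ : n → ℂ)).lie_mem hv
  -- the candidate semisimple part, as a bare function
  set d : n → Module.End ℂ V := fun x ↦
    e.conj (DirectSum.toModule ℂ _ _ fun χ ↦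
      ((χ : n → ℂ) x) • DirectSum.lof ℂ _ (fun χ ↦ S χ) χ) with hddef
  -- key pointwise description of `d`
  have hd : ∀ (x : n) (χ : LieModule.Weight ℂ n V) (v : V), v ∈ S χ →
      d x v = (χ : n → ℂ) x • v := by
    intro x χ v hv
    have h1 : e (DirectSum.lof ℂ _ (fun χ ↦ S χ) χ ⟨v, hv⟩) = v := by
      simp only [hedef, LinearEquiv.ofBijective_apply, DirectSum.lof_eq_of]
      exact DirectSum.coeLinearMap_of S χ ⟨v, hv⟩
    have h2 : e.symm v = DirectSum.lof ℂ _ (fun χ ↦ S χ) χ ⟨v, hv⟩ :=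
      (LinearEquiv.symm_apply_eq e).mpr h1.symm
    rw [hddef]
    rw [LinearEquiv.conj_apply_apply, h2, DirectSum.toModule_lof]
    simp only [LinearMap.smul_apply, map_smul, h1]
  -- extensionality on weight spaces
  have hext : ∀ f g : Module.End ℂ V,
      (∀ (χ : LieModule.Weight ℂ n V) (v : V), v ∈ S χ → f v = g v) → f = g := by
    intro f g h
    ext v
    have hv : v ∈ ⨆ χ : LieModule.Weight ℂ n V, S χ := by
      rw [hds.submodule_iSup_eq_top]; trivial
    induction hv using Submodule.iSup_induction' with
    | mem χ v hv => exact h χ v hv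
    | zero => simp
    | add v hv w hw hv' hw' => rw [map_add, map_add, hv', hw']
  have hadd : ∀ x y : n, d (x + y) = d x + d y := by
    intro x y
    apply hext
    intro χ v hv
    rw [LinearMap.add_apply, hd _ _ _ hv, hd _ _ _ hv, hd _ _ _ hv, map_add χ x y, add_smul]
  have hsmul : ∀ (c : ℂ) (x : n), d (c • x) = c • d x := by
    intro c x
    apply hext
    intro χ v hv
    rw [LinearMap.smul_apply, hd _ _ _ hv, hd _ _ _ hv, map_smul χ c x, smul_assoc]
  have hlie0 : ∀ x y : n, d ⁅x, y⁆ = 0 := by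
    intro x y
    apply hext
    intro χ v hv
    rw [hd _ _ _ hv, LieModule.Weight.apply_lie, zero_smul, LinearMap.zero_apply]
  have hcomm_dd : ∀ x y : n, Commute (d x) (d y) := by
    intro x y
    apply hext
    intro χ v hv
    have h1 : d y v ∈ S χ := by rw [hd _ _ _ hv]; exact Submodule.smul_mem _ _ hv
    have h2 : d x v ∈ S χ := by rw [hd _ _ _ hv]; exact Submodule.smul_mem _ _ hv
    rw [Module.End.mul_apply, Module.End.mul_apply, hd _ _ _ h1, hd _ _ _ h2,
      hd _ _ _ hv, hd _ _ _ hv, smul_comm]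
  have hcomm_dν : ∀ x y : n, Commute (d x) (ρ y - d y) := by
    intro x y
    apply hext
    intro χ v hv
    have hw : ρ y v - d y v ∈ S χ := by
      refine Submodule.sub_mem _ (hinv y χ v hv) ?_
      rw [hd _ _ _ hv]; exact Submodule.smul_mem _ _ hv
    have h2 : d x v ∈ S χ := by rw [hd _ _ _ hv]; exact Submodule.smul_mem _ _ hv
    rw [Module.End.mul_apply, Module.End.mul_apply, LinearMap.sub_apply, hd _ _ _ hw,
      LinearMap.sub_apply, hd _ _ _ hv]
    rw [hd _ _ _ hv, map_smul, map_smul, smul_sub, hd _ _ _ hv]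
  have hcomm_dρ : ∀ x y : n, Commute (d x) (ρ y) := by
    intro x y
    have := (hcomm_dν x y).add_right (hcomm_dd x y)
    rwa [sub_add_cancel] at this
  -- assemble δ as a Lie algebra morphism
  set δ : n →ₗ⁅ℂ⁆ Module.End ℂ V :=
    { toFun := d
      map_add' := hadd
      map_smul' := hsmul
      map_lie' := by
        intro x y
        show d ⁅x, y⁆ = ⁅d x, d y⁆
        rw [hlie0, Ring.lie_def, (hcomm_dd x y).eq, sub_self] } with hδdef
  -- assemble ν as a Lie algebra morphism
  set ν : n →ₗ⁅ℂ⁆ Module.End ℂ V :=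
    { toFun := fun x ↦ ρ x - d x
      map_add' := by
        intro x y
        show ρ (x + y) - d (x + y) = (ρ x - d x) + (ρ y - d y)
        rw [map_add, hadd]; abel
      map_smul' := by
        intro c x
        show ρ (c • x) - d (c • x) = c • (ρ x - d x)
        rw [map_smul, hsmul, smul_sub]
      map_lie' := by
        intro x y
        show ρ ⁅x, y⁆ - d ⁅x, y⁆ = ⁅ρ x - d x, ρ y - d y⁆
        have h1 : d x * ρ y = ρ y * d x := (hcomm_dρ x y).eq
        have h2 : d y * ρ x = ρ x * d y := (hcomm_dρ y x).eq
        have h3 : d y * d x = d x * d y := (hcomm_dd x y).eq.symm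
        rw [hlie0, sub_zero, LieHom.map_lie, Ring.lie_def, Ring.lie_def]
        simp only [sub_mul, mul_sub]
        rw [h1, h2, h3]
        abel } with hνdef
  refine ⟨δ, ν, ?_, ?_, ?_, ?_, ?_⟩
  · intro x
    show ρ x = d x + (ρ x - d x)
    abel
  · -- semisimplicity of δ x
    intro x
    show (d x).IsSemisimple
    set s : Finset ℂ := Finset.univ.image (fun χ : LieModule.Weight ℂ n V ↦ (χ : n → ℂ) x)
      with hsdef
    have hp : Squarefree (∏ c ∈ s, (Polynomial.X - Polynomial.C c)) := by
      refine Polynomial.Separable.squarefree ?_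
      refine Polynomial.separable_prod_X_sub_C_iff'.mpr ?_
      intro a _ b _ h
      exact h
    refine Module.End.isSemisimple_of_squarefree_aeval_eq_zero hp ?_
    refine hext _ 0 ?_
    intro χ v hv
    have hfac : ∀ (c : ℂ) (w : V), w ∈ S χ →
        (d x - algebraMap ℂ (Module.End ℂ V) c) w ∈ S χ ∧
          (c = (χ : n → ℂ) x → (d x - algebraMap ℂ (Module.End ℂ V) c) w = 0) := by
      intro c w hw
      constructor
      · rw [LinearMap.sub_apply, Module.algebraMap_end_apply, hd _ _ _ hw]
        exact Submodule.sub_mem _ (Submodule.smul_mem _ _ hw) (Submodule.smul_mem _ _ hw)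
      · rintro rfl
        rw [LinearMap.sub_apply, Module.algebraMap_end_apply, hd _ _ _ hw, sub_self]
    have key : ∀ (l : List ℂ) (w : V), w ∈ S χ →
        ((l.map fun c ↦ d x - algebraMap ℂ (Module.End ℂ V) c).prod) w ∈ S χ ∧
          ((χ : n → ℂ) x ∈ l →
            ((l.map fun c ↦ d x - algebraMap ℂ (Module.End ℂ V) c).prod) w = 0) := by
      intro l
      induction l with
      | nil =>
        intro w hw
        refine ⟨by simpa using hw, ?_⟩
        intro h
        simp at h
      | cons c l ih =>
        intro w hw
        obtain ⟨hmem, hzero⟩ := ih w hw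
        have hexp : ((List.map (fun c ↦ d x - algebraMap ℂ (Module.End ℂ V) c) (c :: l)).prod) w
            = (d x - algebraMap ℂ (Module.End ℂ V) c)
                (((l.map fun c ↦ d x - algebraMap ℂ (Module.End ℂ V) c).prod) w) := by
          rw [List.map_cons, List.prod_cons, Module.End.mul_apply]
        constructor
        · rw [hexp]
          exact (hfac c _ hmem).1
        · intro hin
          rcases List.mem_cons.mp hin with h | h
          · rw [hexp]
            exact (hfac c _ hmem).2 h.symm
          · rw [hexp, hzero h, map_zero]
    have hlist : (Polynomial.aeval (d x)) (∏ c ∈ s, (Polynomial.X - Polynomial.C c))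
        = ((s.toList.map fun c ↦ d x - algebraMap ℂ (Module.End ℂ V) c).prod) := by
      rw [← Finset.prod_map_toList, map_list_prod, List.map_map]
      congr 1
      ext c
      simp [Function.comp, map_sub, Polynomial.aeval_X, Polynomial.aeval_C]
    rw [hlist, LinearMap.zero_apply]
    exact (key s.toList v hv).2 (by
      rw [Finset.mem_toList]
      exact Finset.mem_image_of_mem _ (Finset.mem_univ χ))
  · -- nilpotency of ν x
    intro x
    show IsNilpotent (ρ x - d x)
    have htoEnd : ∀ v : V, LieModule.toEnd ℂ n V x v = ρ x v := fun v ↦ rfl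
    -- choose uniform nilpotency exponents on each weight space
    have hk : ∀ χ : LieModule.Weight ℂ n V, ∃ k : ℕ, ∀ v ∈ S χ,
        ((ρ x - algebraMap ℂ (Module.End ℂ V) ((χ : n → ℂ) x)) ^ k) v = 0 := by
      intro χ
      obtain ⟨k, hk⟩ :=
        LieModule.exists_genWeightSpace_le_ker_of_isNoetherian V (χ : n → ℂ) x
      refine ⟨k, fun v hv ↦ ?_⟩
      have h1 : ((LieModule.toEnd ℂ n V x - algebraMap ℂ (Module.End ℂ V)
          ((χ : n → ℂ) x)) ^ k) v = 0 := hk hv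
      have h2 : LieModule.toEnd ℂ n V x = ρ x := by ext w; exact htoEnd w
      rwa [h2] at h1
    choose kf hkf using hk
    set K : ℕ := (Finset.univ : Finset (LieModule.Weight ℂ n V)).sup kf with hKdef
    refine ⟨K, ?_⟩
    refine hext _ 0 ?_
    intro χ v hv
    -- on S χ, (ρ x - d x) agrees with ρ x - χ x, an invariant nilpotent operator
    have hstep : ∀ (m : ℕ) (v : V), v ∈ S χ →
        ((ρ x - d x) ^ m) v =
          ((ρ x - algebraMap ℂ (Module.End ℂ V) ((χ : n → ℂ) x)) ^ m) v ∧
        ((ρ x - algebraMap ℂ (Module.End ℂ V) ((χ : n → ℂ) x)) ^ m) v ∈ S χ := by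
      intro m
      induction m with
      | zero => intro v hv; simpa using hv
      | succ m ih =>
        intro v hv
        obtain ⟨h1, h2⟩ := ih v hv
        set g : Module.End ℂ V := ρ x - algebraMap ℂ (Module.End ℂ V) ((χ : n → ℂ) x)
          with hgdef
        have hgw : g ((g ^ m) v) ∈ S χ := by
          rw [hgdef, LinearMap.sub_apply, Module.algebraMap_end_apply]
          exact Submodule.sub_mem _ (hinv x χ _ h2) (Submodule.smul_mem _ _ h2)
        constructor
        · rw [pow_succ', pow_succ', Module.End.mul_apply, Module.End.mul_apply, h1,
            LinearMap.sub_apply, hd _ _ _ h2, hgdef, LinearMap.sub_apply,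
            Module.algebraMap_end_apply]
        · rw [pow_succ', Module.End.mul_apply]
          exact hgw
    obtain ⟨h1, -⟩ := hstep K v hv
    rw [h1, LinearMap.zero_apply]
    have hle : kf χ ≤ K := Finset.le_sup (Finset.mem_univ χ)
    obtain ⟨j, hj⟩ := Nat.exists_eq_add_of_le hle
    rw [hj, add_comm, pow_add, Module.End.mul_apply, hkf χ v hv, map_zero]
  · intro x y
    show d ⁅x, y⁆ = 0
    exact hlie0 x y
  · intro x y
    exact hcomm_dν x y
end

section
/- Let 𝔤 = 𝔟 ⋉_δ 𝔞 be a semidirect product of a finite-dimensional complex Lie algebra 𝔟 with an abelian Lie algebra 𝔞, where the action homomorphism δ: 𝔟 → gl(𝔞) is injective. Then μ(𝔤) ≤ dim(𝔞) + 1. -/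
attribute [local instance 100] LieRing.ofAssociativeRing

/-- The minimal dimension of a faithful finite-dimensional module of a Lie algebra. -/
noncomputable def lieMu (R g : Type*) [CommRing R] [LieRing g] [LieAlgebra R g] : ℕ :=
  sInf {d : ℕ | ∃ ρ : g →ₗ⁅R⁆ Module.End R (Fin d → R), Function.Injective ρ}

section Semidirect

variable {b a : Type*} [LieRing b] [LieAlgebra ℂ b] [AddCommGroup a] [Module ℂ a]

/-- The semidirect product `𝔟 ⋉_δ 𝔞` of a Lie algebra `𝔟` with an abelian Lie algebra `𝔞`,
defined by a representation `δ : 𝔟 → gl(𝔞)`. -/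
def LieSemidirect (δ : b →ₗ⁅ℂ⁆ Module.End ℂ a) : Type _ := b × a

namespace LieSemidirect

variable (δ : b →ₗ⁅ℂ⁆ Module.End ℂ a)

instance : AddCommGroup (LieSemidirect δ) := Prod.instAddCommGroup
instance : Module ℂ (LieSemidirect δ) := Prod.instModule

instance : LieRing (LieSemidirect δ) where
  bracket p q := ((⁅p.1, q.1⁆ : b), δ p.1 q.2 - δ q.1 p.2)
  add_lie x y z := by
    refine Prod.ext (add_lie x.1 y.1 z.1) ?_
    show δ (x.1 + y.1) z.2 - δ z.1 (x.2 + y.2)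
        = (δ x.1 z.2 - δ z.1 x.2) + (δ y.1 z.2 - δ z.1 y.2)
    simp only [map_add, LinearMap.add_apply]
    abel
  lie_add x y z := by
    refine Prod.ext (lie_add x.1 y.1 z.1) ?_
    show δ x.1 (y.2 + z.2) - δ (y.1 + z.1) x.2
        = (δ x.1 y.2 - δ y.1 x.2) + (δ x.1 z.2 - δ z.1 x.2)
    simp only [map_add, LinearMap.add_apply]
    abel
  lie_self x := by
    refine Prod.ext (lie_self x.1) ?_
    show δ x.1 x.2 - δ x.1 x.2 = 0
    simp
  leibniz_lie x y z := by
    refine Prod.ext (leibniz_lie x.1 y.1 z.1) ?_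
    show δ x.1 (δ y.1 z.2 - δ z.1 y.2) - δ ⁅y.1, z.1⁆ x.2
        = (δ ⁅x.1, y.1⁆ z.2 - δ z.1 (δ x.1 y.2 - δ y.1 x.2))
          + (δ y.1 (δ x.1 z.2 - δ z.1 x.2) - δ ⁅x.1, z.1⁆ y.2)
    simp only [map_sub, LieHom.map_lie, Ring.lie_def, LinearMap.sub_apply,
      Module.End.mul_apply]
    abel

instance : LieAlgebra ℂ (LieSemidirect δ) where
  lie_smul t x y := by
    refine Prod.ext (lie_smul t x.1 y.1) ?_
    show δ x.1 (t • y.2) - δ (t • y.1) x.2 = t • (δ x.1 y.2 - δ y.1 x.2)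
    simp only [map_smul, LinearMap.smul_apply, smul_sub]

end LieSemidirect

end Semidirect

/-- If `𝔤 = 𝔟 ⋉_δ 𝔞` with `𝔞` abelian and `δ` injective, then `μ(𝔤) ≤ dim 𝔞 + 1`. -/
theorem mu_semidirect_abelian_le
    (b a : Type*) [LieRing b] [LieAlgebra ℂ b] [FiniteDimensional ℂ b]
    [AddCommGroup a] [Module ℂ a] [FiniteDimensional ℂ a]
    (δ : b →ₗ⁅ℂ⁆ Module.End ℂ a) (hδ : Function.Injective δ) :
    lieMu ℂ (LieSemidirect δ) ≤ Module.finrank ℂ a + 1 := by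
  set r := Module.finrank ℂ a with hr
  -- representation on a × ℂ
  let ρ : LieSemidirect δ →ₗ⁅ℂ⁆ Module.End ℂ (a × ℂ) :=
    { toFun := fun p =>
        { toFun := fun w => (δ p.1 w.1 + w.2 • p.2, 0)
          map_add' := by
            intro w₁ w₂
            refine Prod.ext ?_ (by simp)
            show δ p.1 (w₁.1 + w₂.1) + (w₁.2 + w₂.2) • p.2
              = (δ p.1 w₁.1 + w₁.2 • p.2) + (δ p.1 w₂.1 + w₂.2 • p.2)
            simp only [map_add, add_smul]
            abel
          map_smul' := by
            intro c w
            refine Prod.ext ?_ (by simp)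
            show δ p.1 (c • w.1) + (c * w.2) • p.2 = c • (δ p.1 w.1 + w.2 • p.2)
            simp [smul_add, smul_smul] }
      map_add' := by
        intro p q
        refine LinearMap.ext fun w => Prod.ext ?_ (by simp)
        show δ (p.1 + q.1) w.1 + w.2 • (p.2 + q.2)
            = ((δ p.1 w.1 + w.2 • p.2) + (δ q.1 w.1 + w.2 • q.2), (0:ℂ)+0).1
        simp only [map_add, LinearMap.add_apply, smul_add]
        abel
      map_smul' := by
        intro c p
        refine LinearMap.ext fun w => Prod.ext ?_ (by simp)
        show δ (c • p.1) w.1 + w.2 • (c • p.2) = (c • (δ p.1 w.1 + w.2 • p.2, (0:ℂ))).1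
        simp only [Prod.smul_fst, map_smul, LinearMap.smul_apply, smul_add]
        rw [smul_comm]
      map_lie' := by
        intro p q
        refine LinearMap.ext fun w => Prod.ext ?_ (by simp)
        show δ ⁅p.1, q.1⁆ w.1 + w.2 • (δ p.1 q.2 - δ q.1 p.2)
            = ((δ p.1 (δ q.1 w.1 + w.2 • q.2) + (0:ℂ) • p.2, (0:ℂ))
              - (δ q.1 (δ p.1 w.1 + w.2 • p.2) + (0:ℂ) • q.2, (0:ℂ))).1
        simp only [LieHom.map_lie, Ring.lie_def, LinearMap.sub_apply,
          Module.End.mul_apply, map_add, map_smul, smul_sub, zero_smul, add_zero,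
          Prod.fst_sub]
        abel }
  have hρ : Function.Injective ρ := by
    intro p q hpq
    have h2 : ∀ w : a × ℂ, δ p.1 w.1 + w.2 • p.2 = δ q.1 w.1 + w.2 • q.2 := by
      intro w
      have := congrArg (fun f : Module.End ℂ (a × ℂ) => (f w).1) hpq
      exact this
    have hp2 : p.2 = q.2 := by simpa using h2 (0, 1)
    have hp1 : p.1 = q.1 := by
      apply hδ
      ext v
      simpa using h2 (v, 0)
    exact Prod.ext hp1 hp2
  -- transfer to Fin (r+1) → ℂ
  have hfr : Module.finrank ℂ (a × ℂ) = Module.finrank ℂ (Fin (r + 1) → ℂ) := by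
    simp [Module.finrank_prod, Module.finrank_fin_fun, hr]
  let e : (a × ℂ) ≃ₗ[ℂ] (Fin (r + 1) → ℂ) := LinearEquiv.ofFinrankEq _ _ hfr
  refine Nat.sInf_le ⟨(e.lieConj.toLieHom.comp ρ), ?_⟩
  exact e.lieConj.injective.comp hρ
end

section
/- For n ≥ 3 the function f(n, β) = β + Σ_{j=0}^{n−2} p_{n−1−β}(j) is monotonically non-increasing in β for 1 ≤ β ≤ n−1; that is, f(n, n−1) ≤ f(n, n−2) ≤ ⋯ ≤ f(n, 2) = f(n, 1). -/
/-- `restrictedPartitions k j` is the number `p_k(j)` of partitions of `j` in which each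
part is at most `k`. -/
def restrictedPartitions (k j : ℕ) : ℕ :=
  Fintype.card {p : j.Partition // ∀ i ∈ p.parts, i ≤ k}

/-- `partitionBound n β = f(n, β) = β + Σ_{j=0}^{n-2} p_{n-1-β}(j)`. -/
def partitionBound (n β : ℕ) : ℕ :=
  β + ∑ j ∈ Finset.range (n - 1), restrictedPartitions (n - 1 - β) j

lemma restrictedPartitions_eq_card (k j : ℕ) :
    restrictedPartitions k j
      = (Finset.univ.filter fun p : j.Partition => ∀ i ∈ p.parts, i ≤ k).card := by
  rw [restrictedPartitions, Fintype.card_subtype]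

lemma part_le (j : ℕ) (p : j.Partition) {i : ℕ} (hi : i ∈ p.parts) : i ≤ j :=
  (Multiset.le_sum_of_mem hi).trans_eq p.parts_sum

lemma restrictedPartitions_mono {k k' : ℕ} (h : k ≤ k') (j : ℕ) :
    restrictedPartitions k j ≤ restrictedPartitions k' j := by
  rw [restrictedPartitions_eq_card, restrictedPartitions_eq_card]
  apply Finset.card_le_card
  intro p hp
  simp only [Finset.mem_filter, Finset.mem_univ, true_and] at hp ⊢
  exact fun i hip => le_trans (hp i hip) h

lemma restrictedPartitions_of_le {k j : ℕ} (h : j ≤ k) :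
    restrictedPartitions k j = Fintype.card j.Partition := by
  rw [restrictedPartitions_eq_card, Fintype.card]
  congr 1
  rw [Finset.filter_eq_self]
  exact fun p _ i hi => (part_le j p hi).trans h

/-- A partition of `k ≥ 1` containing a part which is not `≤ k - 1` must be indiscrete. -/
lemma eq_indiscrete {k : ℕ} (hk : 1 ≤ k) (p : k.Partition)
    (hp : ¬ ∀ i ∈ p.parts, i ≤ k - 1) : p = Nat.Partition.indiscrete k := by
  push_neg at hp
  obtain ⟨i, hi, hik⟩ := hp
  have h1 : i = k := le_antisymm (part_le k p hi) (by omega)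
  subst h1
  obtain ⟨s, hs⟩ := Multiset.exists_cons_of_mem hi
  have hsum := p.parts_sum
  rw [hs, Multiset.sum_cons] at hsum
  have hs0 : s = 0 := by
    rw [Multiset.eq_zero_iff_forall_notMem]
    intro a ha
    have := p.parts_pos (by rw [hs]; exact Multiset.mem_cons_of_mem ha)
    have := Multiset.le_sum_of_mem ha
    omega
  apply Nat.Partition.ext
  rw [hs, hs0, Nat.Partition.indiscrete_parts (by omega)]
  rfl

lemma key {k : ℕ} (hk : 1 ≤ k) :
    restrictedPartitions k k = restrictedPartitions (k - 1) k + 1 := by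
  rw [restrictedPartitions_of_le le_rfl, restrictedPartitions_eq_card]
  have hfilter : (Finset.univ.filter fun p : k.Partition => ∀ i ∈ p.parts, i ≤ k - 1)
      = Finset.univ.erase (Nat.Partition.indiscrete k) := by
    ext p
    simp only [Finset.mem_filter, Finset.mem_univ, true_and, Finset.mem_erase, and_true]
    constructor
    · intro hp hpe
      have := hp k (by rw [hpe, Nat.Partition.indiscrete_parts (by omega)]; simp)
      omega
    · intro hp
      by_contra h
      exact hp (eq_indiscrete hk p h)
  rw [hfilter, Finset.card_erase_of_mem (Finset.mem_univ _), Fintype.card]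
  have : 0 < Finset.univ.card (α := k.Partition) :=
    Finset.card_pos.2 ⟨Nat.Partition.indiscrete k, Finset.mem_univ _⟩
  omega

theorem partitionBound_monotone (n : ℕ) (hn : 3 ≤ n) :
    (∀ β : ℕ, 1 ≤ β → β + 1 ≤ n - 1 → partitionBound n (β + 1) ≤ partitionBound n β) ∧
    partitionBound n 2 = partitionBound n 1 := by
  constructor
  · intro β hβ1 hβn
    unfold partitionBound
    set K := n - 1 - β with hK
    have hK1 : 1 ≤ K := by omega
    have hKmem : K ∈ Finset.range (n - 1) := Finset.mem_range.2 (by omega)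
    have hsum : ∑ j ∈ Finset.range (n - 1), restrictedPartitions (n - 1 - (β + 1)) j
        < ∑ j ∈ Finset.range (n - 1), restrictedPartitions K j := by
      apply Finset.sum_lt_sum (fun j _ => restrictedPartitions_mono (by omega) j) ⟨K, hKmem, ?_⟩
      have : n - 1 - (β + 1) = K - 1 := by omega
      rw [this, key hK1]
      omega
    omega
  · unfold partitionBound
    have h1 : n - 1 - 1 = n - 2 := by omega
    have h2 : n - 1 - 2 = n - 2 - 1 := by omega
    rw [h1, h2]
    have hmem : n - 2 ∈ Finset.range (n - 1) := Finset.mem_range.2 (by omega)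
    rw [← Finset.sum_erase_add _ _ hmem, ← Finset.sum_erase_add _ _ hmem]
    have heq : ∀ j ∈ (Finset.range (n - 1)).erase (n - 2),
        restrictedPartitions (n - 2 - 1) j = restrictedPartitions (n - 2) j := by
      intro j hj
      simp only [Finset.mem_erase, Finset.mem_range] at hj
      have hj' : j ≤ n - 2 - 1 := by omega
      rw [restrictedPartitions_of_le hj', restrictedPartitions_of_le (by omega)]
    have hsums : ∑ j ∈ (Finset.range (n - 1)).erase (n - 2),
        restrictedPartitions (n - 2 - 1) j
        = ∑ j ∈ (Finset.range (n - 1)).erase (n - 2), restrictedPartitions (n - 2) j :=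
      Finset.sum_congr rfl heq
    rw [hsums, key (k := n - 2) (by omega)]
    omega
end
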